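/- Let G = (V, E) be a finite simple undirected graph, let k be a natural number, let v₁ ∈ V, and let w_X, w_A : V → ℕ be weight functions; define the weight of a pair (X, A) of disjoint subsets of V as w(X, A) = Σ_{x ∈ X} w_X(x) + Σ_{a ∈ A} w_A(a). Call (X, A) a candidate if X ∩ A = ∅, |X| = k, no edge of G has both endpoints in A, and no edge of G has both endpoints in V ∖ (X ∪ A). Then for every w₀ ∈ ℕ, the number of triples ((X, A), (X_L, X_R)) such that (X, A) is a candidate with w(X, A) = w₀, (X_L, X_R) is a consistent cut of G[X], and v₁ ∈ X_L, is congruent modulo 2 to the number of candidates (X, A) with w(X, A) = w₀, v₁ ∈ X, and G[X] connected. -/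

import Mathlib

set_option linter.unusedSectionVars false
set_option maxHeartbeats 1000000
open scoped Classical

/-- `(XL, XR)` is a consistent cut of the subgraph of `G` induced by `X`:
it partitions `X` and no edge of `G` joins a vertex of `XL` to a vertex of `XR`. -/
def ConsCut {V : Type} [DecidableEq V] (G : SimpleGraph V) (X XL XR : Finset V) : Prop :=
  XL ∪ XR = X ∧ Disjoint XL XR ∧ ∀ u ∈ XL, ∀ v ∈ XR, ¬ G.Adj u v

/-- `(X, A)` is a candidate for connected odd cycle transversal: `X` and `A` are disjoint,
`|X| = k`, `A` is independent in `G`, and `V ∖ (X ∪ A)` is independent in `G`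
(i.e. `(A, V ∖ (X ∪ A))` is a bipartition of `G − X`). -/
def OCTCandidate {V : Type} [DecidableEq V] (G : SimpleGraph V) (k : ℕ)
    (X A : Finset V) : Prop :=
  Disjoint X A ∧ X.card = k ∧
    (∀ u ∈ A, ∀ v ∈ A, ¬ G.Adj u v) ∧
    (∀ u v : V, u ∉ X → u ∉ A → v ∉ X → v ∉ A → ¬ G.Adj u v)

section Aux

lemma even_card_invol {α : Type*} [DecidableEq α] (f : α → α) :
    ∀ s : Finset α, (∀ a ∈ s, f a ∈ s) → (∀ a ∈ s, f (f a) = a) → (∀ a ∈ s, f a ≠ a) →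
      Even s.card := by
  intro s
  induction s using Finset.strongInduction with
  | _ s ih =>
    intro hmem hinv hne
    rcases s.eq_empty_or_nonempty with rfl | ⟨a, ha⟩
    · simp
    · have hfa : f a ∈ s := hmem a ha
      have hane : a ≠ f a := fun h => hne a ha h.symm
      have hsub : {a, f a} ⊆ s := by
        intro x hx
        rcases Finset.mem_insert.mp hx with rfl | hx
        · exact ha
        · rwa [Finset.mem_singleton.mp hx]
      have hss : s \ {a, f a} ⊂ s := by
        refine Finset.sdiff_ssubset hsub ?_
        exact ⟨a, Finset.mem_insert_self _ _⟩
      have hmem' : ∀ b ∈ s \ {a, f a}, f b ∈ s \ {a, f a} := by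
        intro b hb
        rw [Finset.mem_sdiff, Finset.mem_insert, Finset.mem_singleton] at hb ⊢
        push_neg at hb ⊢
        obtain ⟨hbs, hba, hbfa⟩ := hb
        refine ⟨hmem b hbs, ?_, ?_⟩
        · intro h; exact hbfa (by rw [← hinv b hbs, h])
        · intro h
          have := congrArg f h
          rw [hinv b hbs, hinv a ha] at this
          exact hba this
      have hinv' : ∀ b ∈ s \ {a, f a}, f (f b) = b := fun b hb =>
        hinv b (Finset.mem_sdiff.mp hb).1
      have hne' : ∀ b ∈ s \ {a, f a}, f b ≠ b := fun b hb =>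
        hne b (Finset.mem_sdiff.mp hb).1
      have heven := ih _ hss hmem' hinv' hne'
      have hcard : (s \ {a, f a}).card + ({a, f a} : Finset α).card = s.card :=
        Finset.card_sdiff_add_card_eq_card hsub
      rw [Finset.card_pair hane] at hcard
      rw [← hcard]
      exact heven.add (by norm_num)

variable {V : Type} [Fintype V] [DecidableEq V] (G : SimpleGraph V)

/-- `a` and `b` both lie in `X` and are connected in the induced subgraph `G[X]`. -/
def IRel (X : Finset V) (a b : V) : Prop :=
  ∃ (ha : a ∈ (X : Set V)) (hb : b ∈ (X : Set V)),
    (G.induce (X : Set V)).Reachable ⟨a, ha⟩ ⟨b, hb⟩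

lemma IRel.rfl {X : Finset V} {a : V} (ha : a ∈ X) : IRel G X a a :=
  ⟨ha, ha, SimpleGraph.Reachable.refl _⟩

lemma IRel.symm' {X : Finset V} {a b : V} (h : IRel G X a b) : IRel G X b a := by
  obtain ⟨ha, hb, h⟩ := h; exact ⟨hb, ha, h.symm⟩

lemma IRel.trans' {X : Finset V} {a b c : V} (h1 : IRel G X a b) (h2 : IRel G X b c) :
    IRel G X a c := by
  obtain ⟨ha, hb, h1⟩ := h1; obtain ⟨hb', hc, h2⟩ := h2
  exact ⟨ha, hc, h1.trans h2⟩

lemma IRel.step {X : Finset V} {a b c : V} (h : IRel G X a b) (hc : c ∈ X)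
    (hadj : G.Adj b c) : IRel G X a c := by
  obtain ⟨ha, hb, h⟩ := h
  exact ⟨ha, hc, h.trans (SimpleGraph.Adj.reachable (by exact hadj))⟩

/-- walks in induced graph starting in XL stay in XL, for consistent cuts -/
lemma stay {X XL XR : Finset V} (hc : ConsCut G X XL XR)
    {a b : ↥(X : Set V)} (h : (G.induce (X : Set V)).Reachable a b)
    (haL : ↑a ∈ XL) : ↑b ∈ XL := by
  obtain ⟨w⟩ := h
  induction w with
  | nil => exact haL
  | cons hadj p ih =>
    rename_i u x y
    apply ih
    have hadj' : G.Adj ↑u ↑x := hadj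
    have hxX : ↑x ∈ X := Finset.mem_coe.mp x.2
    have hxX' : (↑x : V) ∈ XL ∪ XR := by rw [hc.1]; exact hxX
    rcases Finset.mem_union.mp hxX' with h | h
    · exact h
    · exact absurd hadj' (hc.2.2 _ haL _ h)

/-- If `G[X]` is connected and `(XL, XR)` is a consistent cut with `v₁ ∈ XL`,
then `XL = X` and `XR = ∅`. -/
lemma cut_of_connected {v₁ : V} {X XL XR : Finset V} (hc : ConsCut G X XL XR)
    (hv : v₁ ∈ XL) (hconn : (G.induce (X : Set V)).Connected) : XL = X ∧ XR = ∅ := by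
  have hvX : v₁ ∈ X := by
    rw [← hc.1]; exact Finset.mem_union_left _ hv
  have hXR : XR = ∅ := by
    by_contra h
    obtain ⟨x, hx⟩ := Finset.nonempty_of_ne_empty h
    have hxX : x ∈ X := by rw [← hc.1]; exact Finset.mem_union_right _ hx
    have hreach := hconn.preconnected ⟨v₁, Finset.mem_coe.mpr hvX⟩ ⟨x, Finset.mem_coe.mpr hxX⟩
    have := stay G hc hreach hv
    exact (Finset.disjoint_left.mp hc.2.1) this hx
  refine ⟨?_, hXR⟩
  rw [← hc.1, hXR, Finset.union_empty]

open Classical in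
/-- vertices of `X` not connected to `v₁` in `G[X]` -/
noncomputable def badSet (v₁ : V) (X : Finset V) : Finset V :=
  X.filter (fun u => ¬ IRel G X v₁ u)

open Classical in
/-- a canonical vertex of `X` not connected to `v₁` (if one exists) -/
noncomputable def u0 (v₁ : V) (X : Finset V) : V :=
  if h : (badSet G v₁ X).Nonempty then h.choose else v₁

open Classical in
/-- the connected component of `u0` in `G[X]`, as a finset -/
noncomputable def flipC (v₁ : V) (X : Finset V) : Finset V :=
  X.filter (fun x => IRel G X (u0 G v₁ X) x)

lemma badSet_nonempty {v₁ : V} {X : Finset V} (hv : v₁ ∈ X)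
    (hnc : ¬ (G.induce (X : Set V)).Connected) : (badSet G v₁ X).Nonempty := by
  classical
  have hne : Nonempty ↥(X : Set V) := ⟨⟨v₁, Finset.mem_coe.mpr hv⟩⟩
  have hpc : ¬ (G.induce (X : Set V)).Preconnected := by
    intro hpc
    exact hnc (SimpleGraph.Connected.mk hpc)
  rw [SimpleGraph.Preconnected] at hpc
  push_neg at hpc
  obtain ⟨a, b, hab⟩ := hpc
  by_cases ha : IRel G X v₁ ↑a
  · by_cases hb : IRel G X v₁ ↑b
    · exfalso
      obtain ⟨_, ha2, hra⟩ := ha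
      obtain ⟨_, hb2, hrb⟩ := hb
      have : (G.induce (X : Set V)).Reachable a b := by
        have h1 : (⟨↑a, ha2⟩ : ↥(X : Set V)) = a := Subtype.ext rfl
        have h2 : (⟨↑b, hb2⟩ : ↥(X : Set V)) = b := Subtype.ext rfl
        rw [h1] at hra; rw [h2] at hrb
        exact hra.symm.trans hrb
      exact hab this
    · exact ⟨↑b, Finset.mem_filter.mpr ⟨Finset.mem_coe.mp b.2, hb⟩⟩
  · exact ⟨↑a, Finset.mem_filter.mpr ⟨Finset.mem_coe.mp a.2, ha⟩⟩

lemma u0_spec {v₁ : V} {X : Finset V} (h : (badSet G v₁ X).Nonempty) :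
    u0 G v₁ X ∈ X ∧ ¬ IRel G X v₁ (u0 G v₁ X) := by
  classical
  rw [u0, dif_pos h]
  have := h.choose_spec
  simp only [badSet, Finset.mem_filter] at this
  exact this

lemma flipC_subset {v₁ : V} {X : Finset V} : flipC G v₁ X ⊆ X :=
  Finset.filter_subset _ _

lemma u0_mem_flipC {v₁ : V} {X : Finset V} (h : (badSet G v₁ X).Nonempty) :
    u0 G v₁ X ∈ flipC G v₁ X :=
  Finset.mem_filter.mpr ⟨(u0_spec G h).1, IRel.rfl G (u0_spec G h).1⟩

lemma v₁_not_mem_flipC {v₁ : V} {X : Finset V} (h : (badSet G v₁ X).Nonempty) :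
    v₁ ∉ flipC G v₁ X := by
  intro hmem
  exact (u0_spec G h).2 ((Finset.mem_filter.mp hmem).2.symm' G)

lemma flipC_closed {v₁ : V} {X : Finset V} {x y : V} (hx : x ∈ flipC G v₁ X)
    (hy : y ∈ X) (hadj : G.Adj x y) : y ∈ flipC G v₁ X := by
  rw [flipC, Finset.mem_filter] at hx ⊢
  exact ⟨hy, (hx.2).step G hy hadj⟩

end Aux

/-- Cut&Count correctness for **Connected Odd Cycle Transversal**: for every target weight
`w₀`, the number of tuples `((X, A), (X_L, X_R))` where `(X, A)` is a candidate of weight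
`w₀`, `(X_L, X_R)` is a consistent cut of `G[X]` and `v₁ ∈ X_L`, is congruent modulo 2 to
the number of candidates `(X, A)` of weight `w₀` with `v₁ ∈ X` and `G[X]` connected. -/
theorem coct_cut_and_count {V : Type} [Fintype V] [DecidableEq V] (G : SimpleGraph V)
    (k : ℕ) (v₁ : V) (wX wA : V → ℕ) (w₀ : ℕ) :
    Set.ncard {t : (Finset V × Finset V) × Finset V × Finset V |
        OCTCandidate G k t.1.1 t.1.2 ∧
        (∑ x ∈ t.1.1, wX x) + (∑ a ∈ t.1.2, wA a) = w₀ ∧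
        ConsCut G t.1.1 t.2.1 t.2.2 ∧ v₁ ∈ t.2.1} ≡
      Set.ncard {p : Finset V × Finset V |
        OCTCandidate G k p.1 p.2 ∧
        (∑ x ∈ p.1, wX x) + (∑ a ∈ p.2, wA a) = w₀ ∧
        v₁ ∈ p.1 ∧ (G.induce (p.1 : Set V)).Connected} [MOD 2] := by
  classical
  set S : Set ((Finset V × Finset V) × Finset V × Finset V) :=
    {t | OCTCandidate G k t.1.1 t.1.2 ∧
      (∑ x ∈ t.1.1, wX x) + (∑ a ∈ t.1.2, wA a) = w₀ ∧
      ConsCut G t.1.1 t.2.1 t.2.2 ∧ v₁ ∈ t.2.1} with hS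
  set R : Set (Finset V × Finset V) :=
    {p | OCTCandidate G k p.1 p.2 ∧
      (∑ x ∈ p.1, wX x) + (∑ a ∈ p.2, wA a) = w₀ ∧
      v₁ ∈ p.1 ∧ (G.induce (p.1 : Set V)).Connected} with hR
  have hSfin : S.Finite := Set.toFinite S
  have hRfin : R.Finite := Set.toFinite R
  rw [Set.ncard_eq_toFinset_card' S, Set.ncard_eq_toFinset_card' R]
  set sF : Finset ((Finset V × Finset V) × Finset V × Finset V) := S.toFinset with hsF
  set rF : Finset (Finset V × Finset V) := R.toFinset with hrF
  set cF := sF.filter (fun t => (G.induce (t.1.1 : Set V)).Connected) with hcF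
  set dF := sF.filter (fun t => ¬ (G.induce (t.1.1 : Set V)).Connected) with hdF
  have hsplit : cF.card + dF.card = sF.card :=
    Finset.card_filter_add_card_filter_not _
  -- membership in S unfolded
  have hmemS : ∀ t, t ∈ sF ↔ (OCTCandidate G k t.1.1 t.1.2 ∧
      (∑ x ∈ t.1.1, wX x) + (∑ a ∈ t.1.2, wA a) = w₀ ∧
      ConsCut G t.1.1 t.2.1 t.2.2 ∧ v₁ ∈ t.2.1) := by
    intro t; rw [hsF, Set.mem_toFinset]; rfl
  have hmemR : ∀ p, p ∈ rF ↔ (OCTCandidate G k p.1 p.2 ∧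
      (∑ x ∈ p.1, wX x) + (∑ a ∈ p.2, wA a) = w₀ ∧
      v₁ ∈ p.1 ∧ (G.induce (p.1 : Set V)).Connected) := by
    intro p; rw [hrF, Set.mem_toFinset]; rfl
  -- Step A: the connected part is in bijection with R
  have hA : cF.card = rF.card := by
    apply Finset.card_bij (fun t _ => t.1)
    · intro t ht
      rw [hcF, Finset.mem_filter] at ht
      obtain ⟨hts, hconn⟩ := ht
      rw [hmemS] at hts
      obtain ⟨hcand, hw, hcut, hvL⟩ := hts
      have hvX : v₁ ∈ t.1.1 := by
        rw [← hcut.1]; exact Finset.mem_union_left _ hvL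
      exact (hmemR _).mpr ⟨hcand, hw, hvX, hconn⟩
    · intro t ht t' ht' heq
      rw [hcF, Finset.mem_filter] at ht ht'
      obtain ⟨hts, hconn⟩ := ht
      obtain ⟨hts', hconn'⟩ := ht'
      rw [hmemS] at hts hts'
      obtain ⟨hL, hR0⟩ := cut_of_connected G hts.2.2.1 hts.2.2.2 hconn
      obtain ⟨hL', hR0'⟩ := cut_of_connected G hts'.2.2.1 hts'.2.2.2 hconn'
      have h2 : t.2 = t'.2 := by
        rw [Prod.ext_iff]; constructor
        · rw [hL, hL', heq]
        · rw [hR0, hR0']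
      exact Prod.ext heq h2
    · intro p hp
      rw [hmemR] at hp
      obtain ⟨hcand, hw, hvX, hconn⟩ := hp
      refine ⟨(p, (p.1, ∅)), ?_, rfl⟩
      rw [hcF, Finset.mem_filter]
      refine ⟨(hmemS _).mpr ⟨hcand, hw, ?_, hvX⟩, hconn⟩
      exact ⟨Finset.union_empty _, Finset.disjoint_empty_right _, by simp⟩
  -- Step B: the disconnected part has even cardinality
  have hB : Even dF.card := by
    set f : (Finset V × Finset V) × Finset V × Finset V →
        (Finset V × Finset V) × Finset V × Finset V := fun t =>
      (t.1, ((t.2.1 \ flipC G v₁ t.1.1) ∪ (t.2.2 ∩ flipC G v₁ t.1.1),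
             (t.2.2 \ flipC G v₁ t.1.1) ∪ (t.2.1 ∩ flipC G v₁ t.1.1))) with hf
    apply even_card_invol f
    · -- f maps dF into dF
      intro t ht
      rw [hdF, Finset.mem_filter] at ht ⊢
      obtain ⟨hts, hnc⟩ := ht
      rw [hmemS] at hts
      obtain ⟨hcand, hw, hcut, hvL⟩ := hts
      set C := flipC G v₁ t.1.1 with hC
      have hvX : v₁ ∈ t.1.1 := by rw [← hcut.1]; exact Finset.mem_union_left _ hvL
      have hbad := badSet_nonempty G hvX hnc
      have hCX : C ⊆ t.1.1 := flipC_subset G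
      constructor
      · rw [hmemS]
        refine ⟨hcand, hw, ?_, ?_⟩
        · -- new cut is consistent
          refine ⟨?_, ?_, ?_⟩
          · -- union = X
            have : (t.2.1 \ C ∪ t.2.2 ∩ C) ∪ (t.2.2 \ C ∪ t.2.1 ∩ C) =
                t.2.1 ∪ t.2.2 := by
              ext x
              simp only [Finset.mem_union, Finset.mem_sdiff, Finset.mem_inter]
              by_cases hx : x ∈ C <;> tauto
            rw [hf]; exact this.trans hcut.1
          · -- disjoint
            rw [Finset.disjoint_left]
            intro x hx hx'
            simp only [hf, Finset.mem_union, Finset.mem_sdiff, Finset.mem_inter] at hx hx'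
            have hd := Finset.disjoint_left.mp hcut.2.1
            rcases hx with ⟨h1, h2⟩ | ⟨h1, h2⟩ <;> rcases hx' with ⟨h3, h4⟩ | ⟨h3, h4⟩ <;>
              first
              | exact hd h1 h3
              | exact hd h3 h1
              | exact h2 h4
              | exact h4 h2
          · -- no crossing edges
            intro u hu v hv hadj
            simp only [hf, Finset.mem_union, Finset.mem_sdiff, Finset.mem_inter] at hu hv
            have hd := Finset.disjoint_left.mp hcut.2.1
            have huX : u ∈ t.1.1 := by
              rw [← hcut.1]
              rcases hu with ⟨h1, _⟩ | ⟨h1, _⟩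
              · exact Finset.mem_union_left _ h1
              · exact Finset.mem_union_right _ h1
            have hvXm : v ∈ t.1.1 := by
              rw [← hcut.1]
              rcases hv with ⟨h1, _⟩ | ⟨h1, _⟩
              · exact Finset.mem_union_right _ h1
              · exact Finset.mem_union_left _ h1
            rcases hu with ⟨h1, h2⟩ | ⟨h1, h2⟩ <;> rcases hv with ⟨h3, h4⟩ | ⟨h3, h4⟩
            · exact hcut.2.2 u h1 v h3 hadj
            · exact h2 (flipC_closed G h4 huX hadj.symm)
            · exact h4 (flipC_closed G h2 hvXm hadj)
            · exact hcut.2.2 v h3 u h1 hadj.symm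
        · -- v₁ in new left side
          have : v₁ ∉ C := v₁_not_mem_flipC G hbad
          exact Finset.mem_union_left _ (Finset.mem_sdiff.mpr ⟨hvL, this⟩)
      · exact hnc
    · -- involution
      intro t ht
      have hCC : flipC G v₁ (f t).1.1 = flipC G v₁ t.1.1 := rfl
      rw [hf]
      simp only [hCC]
      set C := flipC G v₁ t.1.1 with hC
      refine Prod.ext rfl (Prod.ext ?_ ?_)
      all_goals {
        ext x
        simp only [Finset.mem_union, Finset.mem_sdiff, Finset.mem_inter]
        by_cases hx : x ∈ C <;> tauto
      }
    · -- no fixed points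
      intro t ht heq
      rw [hdF, Finset.mem_filter] at ht
      obtain ⟨hts, hnc⟩ := ht
      rw [hmemS] at hts
      obtain ⟨hcand, hw, hcut, hvL⟩ := hts
      set C := flipC G v₁ t.1.1 with hC
      have hvX : v₁ ∈ t.1.1 := by rw [← hcut.1]; exact Finset.mem_union_left _ hvL
      have hbad := badSet_nonempty G hvX hnc
      have hu0C : u0 G v₁ t.1.1 ∈ C := u0_mem_flipC G hbad
      have hu0X : u0 G v₁ t.1.1 ∈ t.1.1 := (u0_spec G hbad).1
      have hd := Finset.disjoint_left.mp hcut.2.1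
      have hu0mem : u0 G v₁ t.1.1 ∈ t.2.1 ∪ t.2.2 := by rw [hcut.1]; exact hu0X
      have h1 := congrArg (fun t => t.2.1) heq
      have h2 := congrArg (fun t => t.2.2) heq
      simp only [hf] at h1 h2
      rcases Finset.mem_union.mp hu0mem with h | h
      · -- u0 ∈ XL, then u0 ∈ new XR = XR contradiction
        have : u0 G v₁ t.1.1 ∈ t.2.2 \ C ∪ t.2.1 ∩ C :=
          Finset.mem_union_right _ (Finset.mem_inter.mpr ⟨h, hu0C⟩)
        rw [h2] at this
        exact hd h this
      · have : u0 G v₁ t.1.1 ∈ t.2.1 \ C ∪ t.2.2 ∩ C :=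
          Finset.mem_union_right _ (Finset.mem_inter.mpr ⟨h, hu0C⟩)
        rw [h1] at this
        exact hd this h
  -- conclude
  obtain ⟨m, hm⟩ := hB
  calc sF.card = cF.card + dF.card := hsplit.symm
    _ ≡ cF.card + 0 [MOD 2] := by
        apply Nat.ModEq.add_left
        rw [hm]
        exact Nat.modEq_zero_iff_dvd.mpr ⟨m, by ring⟩
    _ = rF.card := by rw [Nat.add_zero, hA]
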